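/- arXiv:1810.09192 — 6 statements merged into one kernel-verified Lean document; each statement's English description precedes it below -/
import Mathlib

section
/- Let T⁰ and T¹ be real-valued random variables with T¹ ≥ T⁰ almost surely, and fix t > 0 with P(T⁰ ≥ t) > 0 and P(T⁰ < t, T¹ ≥ t) > 0; set π(t) = P(T⁰ ≥ t)/P(T¹ ≥ t). Suppose the following limits as h → 0⁺ exist: λ₁(t) = lim h⁻¹ P(t ≤ T¹ < t+h | T¹ ≥ t), λ₀(t) = lim h⁻¹ P(t ≤ T⁰ < t+h | T⁰ ≥ t), a(t) = lim h⁻¹ P(t ≤ T¹ < t+h | T⁰ ≥ t, T¹ ≥ t), b(t) = lim h⁻¹ P(t ≤ T⁰ < t+h | T⁰ ≥ t, T¹ ≥ t), c(t) = lim h⁻¹ P(t ≤ T¹ < t+h | T⁰ < t, T¹ ≥ t), with a(t) > 0 and b(t) > 0. Define HR(t) = a(t)/b(t) and SR(t) = c(t)/a(t). Then λ₁(t)/λ₀(t) = HR(t) · [π(t) + SR(t)(1 − π(t))]. -/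
open MeasureTheory ProbabilityTheory Filter Set

/-- The sensitivity identity (7) of the paper. Under monotonicity
`T¹ ≥ T⁰` a.s., with `π(t) = P(T⁰ ≥ t)/P(T¹ ≥ t)` and existing hazard limits
`λ₁(t), λ₀(t), a(t), b(t), c(t)` (with `a(t), b(t) > 0`), setting `HR(t) = a(t)/b(t)`
and `SR(t) = c(t)/a(t)`, one has `λ₁(t)/λ₀(t) = HR(t)·[π(t) + SR(t)(1 − π(t))]`. -/
theorem stmt8 {Ω : Type*} [MeasurableSpace Ω] (μ : Measure Ω) [IsProbabilityMeasure μ]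
    (T0 T1 : Ω → ℝ) (hT0 : Measurable T0) (hT1 : Measurable T1)
    (hmono : ∀ᵐ ω ∂μ, T0 ω ≤ T1 ω)
    (t : ℝ) (ht : 0 < t)
    (hpos0 : μ {ω | t ≤ T0 ω} ≠ 0)
    (hpos2 : μ ({ω | T0 ω < t} ∩ {ω | t ≤ T1 ω}) ≠ 0)
    (π : ℝ) (hπ : π = (μ {ω | t ≤ T0 ω}).toReal / (μ {ω | t ≤ T1 ω}).toReal)
    (lam1 lam0 a b c : ℝ)
    (hlam1 : Tendsto (fun h : ℝ =>
        (μ[|{ω | t ≤ T1 ω}] {ω | t ≤ T1 ω ∧ T1 ω < t + h}).toReal / h)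
      (nhdsWithin 0 (Ioi 0)) (nhds lam1))
    (hlam0 : Tendsto (fun h : ℝ =>
        (μ[|{ω | t ≤ T0 ω}] {ω | t ≤ T0 ω ∧ T0 ω < t + h}).toReal / h)
      (nhdsWithin 0 (Ioi 0)) (nhds lam0))
    (ha : Tendsto (fun h : ℝ =>
        (μ[|{ω | t ≤ T0 ω} ∩ {ω | t ≤ T1 ω}] {ω | t ≤ T1 ω ∧ T1 ω < t + h}).toReal / h)
      (nhdsWithin 0 (Ioi 0)) (nhds a))
    (hb : Tendsto (fun h : ℝ =>
        (μ[|{ω | t ≤ T0 ω} ∩ {ω | t ≤ T1 ω}] {ω | t ≤ T0 ω ∧ T0 ω < t + h}).toReal / h)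
      (nhdsWithin 0 (Ioi 0)) (nhds b))
    (hc : Tendsto (fun h : ℝ =>
        (μ[|{ω | T0 ω < t} ∩ {ω | t ≤ T1 ω}] {ω | t ≤ T1 ω ∧ T1 ω < t + h}).toReal / h)
      (nhdsWithin 0 (Ioi 0)) (nhds c))
    (hapos : 0 < a) (hbpos : 0 < b) :
    lam1 / lam0 = (a / b) * (π + (c / a) * (1 - π)) := by
  set A := {ω | t ≤ T0 ω} with hAdef
  set B := {ω | t ≤ T1 ω} with hBdef
  set D := {ω | T0 ω < t} ∩ B with hDdef
  have hAmeas : MeasurableSet A := hT0 measurableSet_Ici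
  have hBmeas : MeasurableSet B := hT1 measurableSet_Ici
  have hDmeas : MeasurableSet D := (hT0 measurableSet_Iio).inter hBmeas
  -- A =ᵐ A ∩ B
  have hABae : A =ᵐ[μ] ((A ∩ B : Set Ω)) := by
    rw [Filter.eventuallyEq_set]
    exact hmono.mono fun ω hω => ⟨fun h => ⟨h, le_trans h hω⟩, fun h => h.1⟩
  have hABμ : μ (A ∩ B) = μ A := (measure_congr hABae).symm
  have hcond0 : μ[|A ∩ B] = μ[|A] := by
    unfold ProbabilityTheory.cond
    rw [hABμ, (Measure.restrict_congr_set hABae).symm]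
  have hl0b : lam0 = b := by
    refine tendsto_nhds_unique hlam0 ?_
    rwa [hcond0] at hb
  -- real-valued masses
  set x := (μ A).toReal with hxdef
  set y := (μ B).toReal with hydef
  set d := (μ D).toReal with hddef
  have hxpos : 0 < x := ENNReal.toReal_pos hpos0 (measure_ne_top _ _)
  have hdpos : 0 < d := ENNReal.toReal_pos hpos2 (measure_ne_top _ _)
  have hcompl : {ω | T0 ω < t} = Aᶜ := by
    ext ω; simp [hAdef, not_le]
  have hdisj : Disjoint (A ∩ B) (Aᶜ ∩ B) :=
    disjoint_compl_right.mono inter_subset_left inter_subset_left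
  have hBsplit : μ B = μ A + μ D := by
    rw [hDdef, hcompl, ← hABμ, ← measure_union hdisj (hAmeas.compl.inter hBmeas)]
    congr 1
    rw [Set.inter_comm A B, Set.inter_comm Aᶜ B, Set.inter_union_compl]
  have hyd : y = x + d := by
    rw [hxdef, hydef, hddef, hBsplit,
      ENNReal.toReal_add (measure_ne_top _ _) (measure_ne_top _ _)]
  have hypos : 0 < y := by rw [hyd]; positivity
  have hx0 : x ≠ 0 := hxpos.ne'
  have hd0 : d ≠ 0 := hdpos.ne'
  have hy0 : y ≠ 0 := hypos.ne'
  -- key pointwise identity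
  have key : ∀ h : ℝ, (μ[|B] {ω | t ≤ T1 ω ∧ T1 ω < t + h}).toReal / h
      = (x * ((μ[|A ∩ B] {ω | t ≤ T1 ω ∧ T1 ω < t + h}).toReal / h)
        + d * ((μ[|D] {ω | t ≤ T1 ω ∧ T1 ω < t + h}).toReal / h)) / y := by
    intro h
    set E := {ω | t ≤ T1 ω ∧ T1 ω < t + h} with hEdef
    have hEmeas : MeasurableSet E :=
      (hT1 measurableSet_Ici).inter (hT1 measurableSet_Iio)
    have hsplitE : μ (B ∩ E) = μ ((A ∩ B) ∩ E) + μ (D ∩ E) := by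
      rw [hDdef, hcompl, ← measure_union (hdisj.mono inter_subset_left inter_subset_left)
        ((hAmeas.compl.inter hBmeas).inter hEmeas), ← Set.union_inter_distrib_right]
      congr 2
      rw [Set.inter_comm A B, Set.inter_comm Aᶜ B, Set.inter_union_compl]
    rw [cond_apply hBmeas, cond_apply (hAmeas.inter hBmeas), cond_apply hDmeas,
      hsplitE, hABμ]
    rw [ENNReal.toReal_mul, ENNReal.toReal_mul, ENNReal.toReal_mul,
      ENNReal.toReal_add (measure_ne_top _ _) (measure_ne_top _ _),
      ENNReal.toReal_inv, ENNReal.toReal_inv, ENNReal.toReal_inv]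
    rw [← hxdef, ← hydef, ← hddef]
    have hxc : x * x⁻¹ = 1 := mul_inv_cancel₀ hx0
    have hdc : d * d⁻¹ = 1 := mul_inv_cancel₀ hd0
    have hyc : y * y⁻¹ = 1 := mul_inv_cancel₀ hy0
    field_simp
  have hlim : Tendsto (fun h : ℝ =>
      (x * ((μ[|A ∩ B] {ω | t ≤ T1 ω ∧ T1 ω < t + h}).toReal / h)
        + d * ((μ[|D] {ω | t ≤ T1 ω ∧ T1 ω < t + h}).toReal / h)) / y)
      (nhdsWithin 0 (Ioi 0)) (nhds ((x * a + d * c) / y)) :=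
    ((ha.const_mul x).add (hc.const_mul d)).div_const y
  have hl1 : lam1 = (x * a + d * c) / y := by
    refine tendsto_nhds_unique ?_ hlim
    have := funext key
    rw [← this]
    exact hlam1
  have h1π : 1 - π = d / y := by
    rw [hπ, hyd]
    have : x + d ≠ 0 := by rw [← hyd]; exact hy0
    field_simp
    ring
  rw [hl1, hl0b, h1π, hπ]
  field_simp
end

section
/- Under the setup of the sensitivity identity — T¹ ≥ T⁰ almost surely, the limits λ₁(t), λ₀(t), a(t), b(t), c(t) exist with a(t) > 0, b(t) > 0, λ₀(t) > 0, and λ₁(t)/λ₀(t) = HR(t)[π(t) + SR(t)(1 − π(t))] with HR(t) = a(t)/b(t), SR(t) = c(t)/a(t), π(t) = P(T⁰ ≥ t)/P(T¹ ≥ t) ∈ [0, 1] — if additionally SR(t) ≥ 1, then HR(t) ≤ λ₁(t)/λ₀(t). In particular, when the observed hazard ratio λ₁(t)/λ₀(t) is constant, e.g. equal to 0.8, the causal hazard ratio satisfies HR(t) ≤ 0.8 for all such t. -/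
open MeasureTheory ProbabilityTheory Filter Set

/-- Under the setup of the sensitivity identity — `T¹ ≥ T⁰` a.s., existing
hazard limits with `a(t) > 0`, `b(t) > 0`, `λ₀(t) > 0`, `π(t) = P(T⁰ ≥ t)/P(T¹ ≥ t)`, and
`λ₁(t)/λ₀(t) = HR(t)[π(t) + SR(t)(1 − π(t))]` with `HR(t) = a/b`, `SR(t) = c/a` — if
additionally `SR(t) ≥ 1` then `HR(t) ≤ λ₁(t)/λ₀(t)`; in particular if the observed hazard
ratio equals `0.8` then `HR(t) ≤ 0.8`. -/
theorem stmt9 {Ω : Type*} [MeasurableSpace Ω] (μ : Measure Ω) [IsProbabilityMeasure μ]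
    (T0 T1 : Ω → ℝ) (hT0 : Measurable T0) (hT1 : Measurable T1)
    (hmono : ∀ᵐ ω ∂μ, T0 ω ≤ T1 ω)
    (t : ℝ) (ht : 0 < t)
    (hpos0 : μ {ω | t ≤ T0 ω} ≠ 0)
    (hpos2 : μ ({ω | T0 ω < t} ∩ {ω | t ≤ T1 ω}) ≠ 0)
    (π : ℝ) (hπ : π = (μ {ω | t ≤ T0 ω}).toReal / (μ {ω | t ≤ T1 ω}).toReal)
    (lam1 lam0 a b c : ℝ)
    (hlam1 : Tendsto (fun h : ℝ =>
        (μ[|{ω | t ≤ T1 ω}] {ω | t ≤ T1 ω ∧ T1 ω < t + h}).toReal / h)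
      (nhdsWithin 0 (Ioi 0)) (nhds lam1))
    (hlam0 : Tendsto (fun h : ℝ =>
        (μ[|{ω | t ≤ T0 ω}] {ω | t ≤ T0 ω ∧ T0 ω < t + h}).toReal / h)
      (nhdsWithin 0 (Ioi 0)) (nhds lam0))
    (ha : Tendsto (fun h : ℝ =>
        (μ[|{ω | t ≤ T0 ω} ∩ {ω | t ≤ T1 ω}] {ω | t ≤ T1 ω ∧ T1 ω < t + h}).toReal / h)
      (nhdsWithin 0 (Ioi 0)) (nhds a))
    (hb : Tendsto (fun h : ℝ =>
        (μ[|{ω | t ≤ T0 ω} ∩ {ω | t ≤ T1 ω}] {ω | t ≤ T0 ω ∧ T0 ω < t + h}).toReal / h)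
      (nhdsWithin 0 (Ioi 0)) (nhds b))
    (hc : Tendsto (fun h : ℝ =>
        (μ[|{ω | T0 ω < t} ∩ {ω | t ≤ T1 ω}] {ω | t ≤ T1 ω ∧ T1 ω < t + h}).toReal / h)
      (nhdsWithin 0 (Ioi 0)) (nhds c))
    (hapos : 0 < a) (hbpos : 0 < b) (hlam0pos : 0 < lam0)
    (hπmem : 0 ≤ π ∧ π ≤ 1)
    (hidentity : lam1 / lam0 = (a / b) * (π + (c / a) * (1 - π)))
    (hSR : 1 ≤ c / a) :
    a / b ≤ lam1 / lam0 ∧ (lam1 / lam0 = 0.8 → a / b ≤ 0.8) := by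
  have key : a / b ≤ lam1 / lam0 := by
    rw [hidentity]
    have h1 : 0 ≤ 1 - π := by linarith [hπmem.2]
    have h2 : 0 < a / b := div_pos hapos hbpos
    nlinarith [mul_le_mul_of_nonneg_left hSR h1]
  exact ⟨key, fun h => h ▸ key⟩
end

section
/- Let Z be a random variable with values in a measurable space, let ψ₀(t, a) and ψ₁(t, z) be measurable functions, and define the conditional hazards λ_a(t, z) = exp{ψ₀(t, a) + ψ₁(t, z)} for a ∈ {0, 1} and the joint survival weight W(t, z) = exp(−∫₀ᵗ [λ₀(s, z) + λ₁(s, z)] ds). Assume 0 < E[λ₀(t, Z) W(t, Z)] < ∞ and E[λ₁(t, Z) W(t, Z)] < ∞. Then E[λ₁(t, Z) W(t, Z)] / E[λ₀(t, Z) W(t, Z)] = exp{ψ₀(t, 1) − ψ₀(t, 0)}. That is, if T⁰ ⫫ T¹ | Z and the conditional hazard is multiplicative in (A, Z) (model (9)), the marginal causal hazard ratio HR(t) of the principal stratum {T⁰ ≥ t, T¹ ≥ t} equals the conditional hazard ratio HR_Z(t) = exp{ψ₀(t, 1) − ψ₀(t, 0)}. -/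
open MeasureTheory ProbabilityTheory Real

/-- Under the multiplicative hazard model
`λ_a(t,z) = exp{ψ₀(t,a) + ψ₁(t,z)}` with joint survival weight
`W(t,z) = exp(−∫₀ᵗ [λ₀(s,z) + λ₁(s,z)] ds)`, if `0 < E[λ₀(t,Z)W(t,Z)] < ∞` and
`E[λ₁(t,Z)W(t,Z)] < ∞`, then
`E[λ₁(t,Z)W(t,Z)]/E[λ₀(t,Z)W(t,Z)] = exp{ψ₀(t,1) − ψ₀(t,0)}`: the marginal causal
hazard ratio of the principal stratum equals the conditional hazard ratio `HR_Z(t)`. -/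
theorem stmt10 {Ω α : Type*} [MeasurableSpace Ω] [MeasurableSpace α]
    (μ : Measure Ω) [IsProbabilityMeasure μ]
    (Z : Ω → α) (hZ : Measurable Z)
    (ψ₀ : ℝ → ℝ → ℝ) (ψ₁ : ℝ → α → ℝ)
    (hψ₀ : ∀ a, Measurable (fun s => ψ₀ s a)) (hψ₁ : ∀ s, Measurable (ψ₁ s))
    (lam : ℝ → ℝ → α → ℝ)
    (hlam : ∀ s a z, lam s a z = Real.exp (ψ₀ s a + ψ₁ s z))
    (W : ℝ → α → ℝ)
    (hW : ∀ s z, W s z = Real.exp (-(∫ r in (0:ℝ)..s, (lam r 0 z + lam r 1 z))))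
    (t : ℝ)
    (hpos : 0 < ∫ ω, lam t 0 (Z ω) * W t (Z ω) ∂μ)
    (hint0 : Integrable (fun ω => lam t 0 (Z ω) * W t (Z ω)) μ)
    (hint1 : Integrable (fun ω => lam t 1 (Z ω) * W t (Z ω)) μ) :
    (∫ ω, lam t 1 (Z ω) * W t (Z ω) ∂μ) / (∫ ω, lam t 0 (Z ω) * W t (Z ω) ∂μ)
      = Real.exp (ψ₀ t 1 - ψ₀ t 0) := by
  have key : ∀ z, lam t 1 z * W t z
      = Real.exp (ψ₀ t 1 - ψ₀ t 0) * (lam t 0 z * W t z) := by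
    intro z
    rw [hlam, hlam, ← mul_assoc, ← Real.exp_add]
    ring_nf
  have h1 : (∫ ω, lam t 1 (Z ω) * W t (Z ω) ∂μ)
      = Real.exp (ψ₀ t 1 - ψ₀ t 0) * ∫ ω, lam t 0 (Z ω) * W t (Z ω) ∂μ := by
    rw [← integral_const_mul]
    exact integral_congr_ae (Filter.Eventually.of_forall fun ω => key (Z ω))
  rw [h1, mul_div_assoc, div_self hpos.ne', mul_one]
end

section
/- Let θ > 0 and β ∈ ℝ. Let Z be Gamma-distributed with shape 1/θ and rate 1/θ, and V be Exp(1)-distributed, with Z and V independent. Define T⁰ = (1/θ) log((θ/Z)V + 1) and T¹ = (1/(θ e^β)) log((θ/Z)V + 1). Then for every t ≥ 0, P(T⁰ > t) = e^{−t} and P(T¹ > t) = e^{−e^β t}. In particular the marginal Cox model with hazard ratio e^β is correctly specified: P(T¹ > t) = P(T⁰ > t)^{e^β}. -/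
open MeasureTheory ProbabilityTheory Real

lemma gamma_nonpos_null {a r : ℝ} : gammaMeasure a r (Set.Iic 0) = 0 := by
  rw [gammaMeasure, withDensity_apply _ measurableSet_Iic]
  have h1 : ∫⁻ x in Set.Iio 0, gammaPDF a r x = 0 :=
    lintegral_gammaPDF_of_nonpos le_rfl
  have h2 : ∫⁻ x in ({0} : Set ℝ), gammaPDF a r x = 0 :=
    setLIntegral_measure_zero _ _ (by simp)
  have hsub : Set.Iic (0:ℝ) ⊆ Set.Iio 0 ∪ {0} := by
    intro x hx
    rcases lt_or_eq_of_le (show x ≤ (0:ℝ) from hx) with h | h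
    · exact Or.inl h
    · exact Or.inr (by simp [h])
  refine le_antisymm ?_ (zero_le)
  calc ∫⁻ x in Set.Iic 0, gammaPDF a r x
      ≤ ∫⁻ x in Set.Iio 0 ∪ {0}, gammaPDF a r x := lintegral_mono_set hsub
    _ ≤ (∫⁻ x in Set.Iio 0, gammaPDF a r x) + ∫⁻ x in ({0} : Set ℝ), gammaPDF a r x :=
        lintegral_union_le _ _ _
    _ = 0 := by rw [h1, h2, add_zero]

lemma exp_tail {c : ℝ} (hc : 0 ≤ c) :
    expMeasure 1 (Set.Ioi c) = ENNReal.ofReal (Real.exp (-c)) := by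
  haveI : IsProbabilityMeasure (expMeasure 1) := isProbabilityMeasure_expMeasure one_pos
  have hIic : expMeasure 1 (Set.Iic c) = ENNReal.ofReal (1 - Real.exp (-c)) := by
    have h := cdf_expMeasure_eq one_pos c
    rw [if_pos hc, one_mul] at h
    have h2 : (expMeasure 1 (Set.Iic c)).toReal = 1 - Real.exp (-c) := by
      rw [← h]; rw [cdf_eq_real, measureReal_def]
    rw [← h2, ENNReal.ofReal_toReal (measure_ne_top _ _)]
  have hcompl : Set.Ioi c = (Set.Iic c)ᶜ := by simp
  rw [hcompl, measure_compl measurableSet_Iic (measure_ne_top _ _), measure_univ, hIic]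
  have hle : Real.exp (-c) ≤ 1 := by
    rw [← Real.exp_zero]; exact Real.exp_le_exp.2 (by linarith)
  rw [← ENNReal.ofReal_one, ← ENNReal.ofReal_sub _ (by linarith)]
  norm_num

lemma gamma_laplace {a r s : ℝ} (ha : 0 < a) (hr : 0 < r) (hs : 0 ≤ s) :
    ∫⁻ z, ENNReal.ofReal (Real.exp (-(s * z))) ∂(gammaMeasure a r)
      = ENNReal.ofReal ((r / (r + s)) ^ a) := by
  have hrs : 0 < r + s := by linarith
  have hgm : Measurable (gammaPDF a r) := (measurable_gammaPDFReal a r).ennreal_ofReal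
  have hmeas : Measurable fun z : ℝ => ENNReal.ofReal (Real.exp (-(s * z))) := by fun_prop
  rw [gammaMeasure, lintegral_withDensity_eq_lintegral_mul _ hgm hmeas]
  have hpt : ∀ z : ℝ, (gammaPDF a r * fun z => ENNReal.ofReal (Real.exp (-(s * z)))) z
      = ENNReal.ofReal ((r / (r + s)) ^ a) * gammaPDF a (r + s) z := by
    intro z
    rcases lt_or_ge z 0 with hz | hz
    · simp [gammaPDF_of_neg hz]
    · simp only [Pi.mul_apply, gammaPDF_of_nonneg hz]
      rw [← ENNReal.ofReal_mul (by positivity), ← ENNReal.ofReal_mul (by positivity)]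
      congr 1
      have hA : (0:ℝ) < (r + s) ^ a := rpow_pos_of_pos hrs a
      have hdiv : (r / (r + s)) ^ a = r ^ a / (r + s) ^ a :=
        Real.div_rpow hr.le hrs.le a
      have hexp : Real.exp (-((r + s) * z)) = Real.exp (-(r * z)) * Real.exp (-(s * z)) := by
        rw [← Real.exp_add]; ring_nf
      rw [hdiv, hexp]
      have hG : Real.Gamma a ≠ 0 := (Real.Gamma_pos_of_pos ha).ne'
      field_simp
  have hgm2 : Measurable (gammaPDF a (r+s)) := (measurable_gammaPDFReal a (r+s)).ennreal_ofReal
  rw [lintegral_congr hpt, lintegral_const_mul _ hgm2,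
    lintegral_gammaPDF_eq_one ha hrs, mul_one]

lemma core_tail {Ω : Type*} [MeasurableSpace Ω] (μ : Measure Ω) [IsProbabilityMeasure μ]
    (θ : ℝ) (hθ : 0 < θ)
    (Z V : Ω → ℝ) (hZmeas : Measurable Z) (hVmeas : Measurable V)
    (hZ : Measure.map Z μ = gammaMeasure (1 / θ) (1 / θ))
    (hV : Measure.map V μ = expMeasure 1)
    (hindep : IndepFun Z V μ) (u : ℝ) (hu : 0 ≤ u) :
    μ {ω | θ * u < Real.log ((θ / Z ω) * V ω + 1)}
      = ENNReal.ofReal (Real.exp (-u)) := by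
  haveI : IsProbabilityMeasure (gammaMeasure (1/θ) (1/θ)) :=
    isProbabilityMeasure_gammaMeasure (by positivity) (by positivity)
  haveI : IsProbabilityMeasure (expMeasure 1) := isProbabilityMeasure_expMeasure one_pos
  set s : ℝ := (Real.exp (θ * u) - 1) / θ with hs_def
  have hE1 : 1 ≤ Real.exp (θ * u) := Real.one_le_exp (by positivity)
  have hs : 0 ≤ s := div_nonneg (by linarith) hθ.le
  -- a.e. positivity
  have hZpos : ∀ᵐ ω ∂μ, 0 < Z ω := by
    have : μ (Z ⁻¹' Set.Iic 0) = 0 := by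
      rw [← Measure.map_apply hZmeas measurableSet_Iic, hZ]; exact gamma_nonpos_null
    rw [ae_iff]
    convert this using 2
    ext ω; simp
  have hVpos : ∀ᵐ ω ∂μ, 0 < V ω := by
    have : μ (V ⁻¹' Set.Iic 0) = 0 := by
      rw [← Measure.map_apply hVmeas measurableSet_Iic, hV]; exact gamma_nonpos_null
    rw [ae_iff]
    convert this using 2
    ext ω; simp
  -- a.e. set equality
  have hae : {ω | θ * u < Real.log ((θ / Z ω) * V ω + 1)}
      =ᵐ[μ] {ω | Z ω * s < V ω} := by
    filter_upwards [hZpos, hVpos] with ω h1 h2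
    have hXpos : (0:ℝ) < (θ / Z ω) * V ω + 1 := by
      have := mul_nonneg (div_nonneg hθ.le h1.le) h2.le
      linarith
    have key : (θ / Z ω) * V ω + 1 = (θ * V ω + Z ω) / Z ω := by field_simp
    show (θ * u < Real.log ((θ / Z ω) * V ω + 1)) = (Z ω * s < V ω)
    rw [eq_iff_iff, Real.lt_log_iff_exp_lt hXpos, key, lt_div_iff₀ h1, hs_def,
      mul_div_assoc', div_lt_iff₀ hθ]
    constructor <;> intro h <;> nlinarith
  rw [measure_congr hae]
  -- pass to product measure
  have hmap : μ.map (fun ω => (Z ω, V ω))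
      = (gammaMeasure (1/θ) (1/θ)).prod (expMeasure 1) := by
    rw [← hZ, ← hV,
      ← indepFun_iff_map_prod_eq_prod_map_map hZmeas.aemeasurable hVmeas.aemeasurable]
    exact hindep
  have hSmeas : MeasurableSet {p : ℝ × ℝ | p.1 * s < p.2} :=
    measurableSet_lt (measurable_fst.mul_const s) measurable_snd
  have h1 : μ {ω | Z ω * s < V ω}
      = ((gammaMeasure (1/θ) (1/θ)).prod (expMeasure 1)) {p : ℝ × ℝ | p.1 * s < p.2} := by
    rw [← hmap, Measure.map_apply (hZmeas.prodMk hVmeas) hSmeas]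
    rfl
  rw [h1, Measure.prod_apply hSmeas]
  have hZae : ∀ᵐ z ∂(gammaMeasure (1/θ) (1/θ)), 0 < z := by
    rw [ae_iff]
    convert @gamma_nonpos_null (1/θ) (1/θ) using 2
    ext z; simp
  have h2 : ∫⁻ z, expMeasure 1 (Prod.mk z ⁻¹' {p : ℝ × ℝ | p.1 * s < p.2})
        ∂(gammaMeasure (1/θ) (1/θ))
      = ∫⁻ z, ENNReal.ofReal (Real.exp (-(s * z))) ∂(gammaMeasure (1/θ) (1/θ)) := by
    refine lintegral_congr_ae ?_
    filter_upwards [hZae] with z hz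
    have : Prod.mk z ⁻¹' {p : ℝ × ℝ | p.1 * s < p.2} = Set.Ioi (z * s) := by
      ext v; simp [Set.mem_Ioi]
    rw [this, exp_tail (by positivity), mul_comm]
  rw [h2, gamma_laplace (by positivity) (by positivity) hs]
  congr 1
  have hne : Real.exp (θ * u) ≠ 0 := (Real.exp_pos _).ne'
  have h3 : (1/θ) / (1/θ + s) = Real.exp (-(θ * u)) := by
    rw [Real.exp_neg, hs_def]
    field_simp
    ring
  rw [h3, ← Real.exp_mul]
  congr 1
  field_simp

/-- With `Z ~ Gamma(1/θ, 1/θ)` and `V ~ Exp(1)` independent,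
`T⁰ = (1/θ)log((θ/Z)V + 1)` and `T¹ = (1/(θe^β))log((θ/Z)V + 1)` satisfy
`P(T⁰ > t) = e^{−t}` and `P(T¹ > t) = e^{−e^β t}` for all `t ≥ 0`; in particular the
marginal Cox model holds: `P(T¹ > t) = P(T⁰ > t)^{e^β}`. -/
theorem stmt11 {Ω : Type*} [MeasurableSpace Ω] (μ : Measure Ω) [IsProbabilityMeasure μ]
    (θ β : ℝ) (hθ : 0 < θ)
    (Z V : Ω → ℝ) (hZmeas : Measurable Z) (hVmeas : Measurable V)
    (hZ : Measure.map Z μ = gammaMeasure (1 / θ) (1 / θ))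
    (hV : Measure.map V μ = expMeasure 1)
    (hindep : IndepFun Z V μ)
    (T0 T1 : Ω → ℝ)
    (hT0 : ∀ ω, T0 ω = (1 / θ) * Real.log ((θ / Z ω) * V ω + 1))
    (hT1 : ∀ ω, T1 ω = (1 / (θ * Real.exp β)) * Real.log ((θ / Z ω) * V ω + 1)) :
    ∀ t : ℝ, 0 ≤ t →
      μ {ω | t < T0 ω} = ENNReal.ofReal (Real.exp (-t))
      ∧ μ {ω | t < T1 ω} = ENNReal.ofReal (Real.exp (-(Real.exp β * t)))
      ∧ (μ {ω | t < T1 ω}).toReal = (μ {ω | t < T0 ω}).toReal ^ Real.exp β := by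
  intro t ht
  have hβ : (0:ℝ) < Real.exp β := Real.exp_pos β
  have hset0 : {ω | t < T0 ω} = {ω | θ * t < Real.log ((θ / Z ω) * V ω + 1)} := by
    ext ω
    simp only [Set.mem_setOf_eq, hT0]
    rw [show (1/θ) * Real.log ((θ / Z ω) * V ω + 1)
        = Real.log ((θ / Z ω) * V ω + 1) / θ from by ring, lt_div_iff₀ hθ, mul_comm]
  have hset1 : {ω | t < T1 ω} = {ω | θ * (Real.exp β * t) < Real.log ((θ / Z ω) * V ω + 1)} := by
    ext ω
    simp only [Set.mem_setOf_eq, hT1]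
    rw [show (1/(θ * Real.exp β)) * Real.log ((θ / Z ω) * V ω + 1)
        = Real.log ((θ / Z ω) * V ω + 1) / (θ * Real.exp β) from by ring,
      lt_div_iff₀ (by positivity)]
    constructor <;> intro h <;> nlinarith
  have h0 := core_tail μ θ hθ Z V hZmeas hVmeas hZ hV hindep t ht
  have h1 := core_tail μ θ hθ Z V hZmeas hVmeas hZ hV hindep (Real.exp β * t)
    (by positivity)
  rw [hset0, hset1]
  refine ⟨h0, h1, ?_⟩
  rw [h0, h1, ENNReal.toReal_ofReal (Real.exp_nonneg _),
    ENNReal.toReal_ofReal (Real.exp_nonneg _), ← Real.exp_mul]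
  congr 1
  ring
end

section
/- Let θ > 0, β ∈ ℝ, and define C(s, u) = (e^{θs} + e^{θ e^β u} − 1)^{−1/θ} for s, u ≥ 0. Then for every t > 0 the partial derivatives of C at (t, t) satisfy ∂_u C(t, t) / ∂_s C(t, t) = e^β exp{tθ(e^β − 1)}. Hence the marginal causal hazard ratio of this data-generating process is HR(t) = e^β exp{tθ(e^β − 1)}; it equals e^β at t = 0, and when β < 0 it is strictly decreasing in t and tends to 0 as t → ∞. -/
open Real Filter

/-- For `C(s,u) = (e^{θs} + e^{θe^β u} − 1)^{−1/θ}`, the partial derivatives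
at `(t,t)` satisfy `∂_u C(t,t)/∂_s C(t,t) = e^β exp{tθ(e^β − 1)}`; hence the marginal
causal hazard ratio is `HR(t) = e^β exp{tθ(e^β − 1)}`, which equals `e^β` at `t = 0`, and
for `β < 0` is strictly decreasing in `t` and tends to `0` as `t → ∞`. -/
theorem stmt13 (θ β : ℝ) (hθ : 0 < θ)
    (C : ℝ → ℝ → ℝ)
    (hC : ∀ s u : ℝ, 0 ≤ s → 0 ≤ u →
      C s u = (Real.exp (θ * s) + Real.exp (θ * Real.exp β * u) - 1) ^ (-(1 / θ))) :
    (∀ t : ℝ, 0 < t →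
      deriv (fun u => C t u) t / deriv (fun s => C s t) t
        = Real.exp β * Real.exp (t * θ * (Real.exp β - 1)))
    ∧ Real.exp β * Real.exp ((0 : ℝ) * θ * (Real.exp β - 1)) = Real.exp β
    ∧ (β < 0 →
        StrictAntiOn (fun t => Real.exp β * Real.exp (t * θ * (Real.exp β - 1)))
          (Set.Ici 0)
        ∧ Tendsto (fun t => Real.exp β * Real.exp (t * θ * (Real.exp β - 1)))
            atTop (nhds 0)) := by
  refine ⟨?_, by simp, ?_⟩
  · intro t ht
    -- positivity of the base A = e^{θt} + e^{θe^β t} - 1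
    have hA : (0:ℝ) < Real.exp (θ * t) + Real.exp (θ * Real.exp β * t) - 1 := by
      have h1 : (1:ℝ) < Real.exp (θ * t) := by
        rw [show (1:ℝ) = Real.exp 0 by simp]
        exact Real.exp_lt_exp.mpr (by positivity)
      have h2 : (0:ℝ) < Real.exp (θ * Real.exp β * t) := Real.exp_pos _
      linarith
    set p : ℝ := -(1/θ) with hp
    have hpne : p ≠ 0 := by
      simp only [hp, neg_ne_zero]
      exact one_div_ne_zero hθ.ne'
    -- derivative in u
    have hdu : deriv (fun u => C t u) t
        = (θ * Real.exp β * Real.exp (θ * Real.exp β * t)) * p *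
          (Real.exp (θ * t) + Real.exp (θ * Real.exp β * t) - 1) ^ (p - 1) := by
      have heq : (fun u => C t u) =ᶠ[nhds t]
          (fun u => (Real.exp (θ * t) + Real.exp (θ * Real.exp β * u) - 1) ^ p) := by
        filter_upwards [eventually_gt_nhds ht] with u hu
        exact hC t u ht.le hu.le
      rw [heq.deriv_eq]
      have hinner : HasDerivAt
          (fun u : ℝ => Real.exp (θ * t) + Real.exp (θ * Real.exp β * u) - 1)
          (θ * Real.exp β * Real.exp (θ * Real.exp β * t)) t := by
        have h0 : HasDerivAt (fun u : ℝ => θ * Real.exp β * u) (θ * Real.exp β) t := by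
          simpa using (hasDerivAt_id t).const_mul (θ * Real.exp β)
        have := (h0.exp)
        have h1 : HasDerivAt (fun u : ℝ => Real.exp (θ * Real.exp β * u))
            (Real.exp (θ * Real.exp β * t) * (θ * Real.exp β)) t := this
        have h2 := (h1.const_add (Real.exp (θ * t))).sub_const 1
        exact h2.congr_deriv (by ring)
      have := (hinner.rpow_const (p := p) (Or.inl hA.ne'))
      exact this.deriv
    -- derivative in s
    have hds : deriv (fun s => C s t) t
        = (θ * Real.exp (θ * t)) * p *
          (Real.exp (θ * t) + Real.exp (θ * Real.exp β * t) - 1) ^ (p - 1) := by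
      have heq : (fun s => C s t) =ᶠ[nhds t]
          (fun s => (Real.exp (θ * s) + Real.exp (θ * Real.exp β * t) - 1) ^ p) := by
        filter_upwards [eventually_gt_nhds ht] with s hs
        exact hC s t hs.le ht.le
      rw [heq.deriv_eq]
      have hinner : HasDerivAt
          (fun s : ℝ => Real.exp (θ * s) + Real.exp (θ * Real.exp β * t) - 1)
          (θ * Real.exp (θ * t)) t := by
        have h0 : HasDerivAt (fun s : ℝ => θ * s) θ t := by
          simpa using (hasDerivAt_id t).const_mul θ
        have h1 : HasDerivAt (fun s : ℝ => Real.exp (θ * s))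
            (Real.exp (θ * t) * θ) t := h0.exp
        have h2 := (h1.add_const (Real.exp (θ * Real.exp β * t))).sub_const 1
        exact h2.congr_deriv (by ring)
      have := (hinner.rpow_const (p := p) (Or.inl hA.ne'))
      exact this.deriv
    rw [hdu, hds]
    have hPow : (Real.exp (θ * t) + Real.exp (θ * Real.exp β * t) - 1) ^ (p - 1) ≠ 0 :=
      (Real.rpow_pos_of_pos hA _).ne'
    rw [mul_div_mul_right _ _ hPow, mul_div_mul_right _ _ hpne]
    have hmul : Real.exp (t * θ * (Real.exp β - 1)) * Real.exp (θ * t)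
        = Real.exp (θ * Real.exp β * t) := by
      rw [← Real.exp_add]; ring_nf
    rw [div_eq_iff (by positivity : θ * Real.exp (θ * t) ≠ 0)]
    linear_combination (-(Real.exp β * θ)) * hmul
  · intro hβ
    have hcoef : θ * (Real.exp β - 1) < 0 := by
      have : Real.exp β < 1 := Real.exp_lt_one_iff.mpr hβ
      nlinarith
    constructor
    · intro x hx y hy hxy
      have : y * θ * (Real.exp β - 1) < x * θ * (Real.exp β - 1) := by
        have hx' : x * (θ * (Real.exp β - 1)) > y * (θ * (Real.exp β - 1)) :=
          (mul_lt_mul_right_of_neg hcoef).mpr hxy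
        linarith [hx']
      exact mul_lt_mul_of_pos_left (Real.exp_lt_exp.mpr this) (Real.exp_pos β)
    · have h1 : Tendsto (fun t : ℝ => t * θ * (Real.exp β - 1)) atTop atBot := by
        have := tendsto_id.atTop_mul_const_of_neg hcoef
        simpa [mul_assoc] using this
      have h2 : Tendsto (fun t : ℝ => Real.exp (t * θ * (Real.exp β - 1))) atTop (nhds 0) :=
        Real.tendsto_exp_atBot.comp h1
      simpa using h2.const_mul (Real.exp β)
end

section
/- Let Z be a random variable with values in a measurable space, ψ : [0, ∞) → ℝ and ω : [0, ∞) × range(Z) → [0, ∞) measurable, and define the joint survival function J(s, u) = E[exp(−∫₀ˢ ω(r, Z) dr − ∫₀ᵘ (ψ(r) + ω(r, Z)) dr)]. Fix t > 0 and assume J is partially differentiable at (t, t) with differentiation under the expectation valid and J(t, t) > 0. Then the principal-stratum hazard difference equals ψ(t): (−∂_u J(t, t))/J(t, t) − (−∂_s J(t, t))/J(t, t) = ψ(t). Equivalently, lim_{h→0} h⁻¹[P(t ≤ T¹ < t+h | T⁰ ≥ t, T¹ ≥ t) − P(t ≤ T⁰ < t+h | T⁰ ≥ t, T¹ ≥ t)]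 = ψ(t) when T⁰, T¹ are conditionally independent given Z with conditional hazards ω(t, Z) and ψ(t) + ω(t, Z). -/
open MeasureTheory ProbabilityTheory Real

/-- Appendix A.5: Under the additive hazards model with conditional
hazards `ω(t,Z)` (control) and `ψ(t) + ω(t,Z)` (treated) and conditional independence of
`T⁰, T¹` given `Z`, the joint survival is
`J(s,u) = E[exp(−∫₀ˢ ω(r,Z)dr − ∫₀ᵘ (ψ(r)+ω(r,Z))dr)]`; if `J` is partially
differentiable at `(t,t)` with differentiation under the expectation valid and
`J(t,t) > 0`, then the principal-stratum hazard difference equals `ψ(t)`: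
`(−∂_u J(t,t))/J(t,t) − (−∂_s J(t,t))/J(t,t) = ψ(t)`. -/
theorem stmt18 {Ω α : Type*} [MeasurableSpace Ω] [MeasurableSpace α]
    (μ : Measure Ω) [IsProbabilityMeasure μ]
    (Z : Ω → α) (hZ : Measurable Z)
    (ψ : ℝ → ℝ) (w : ℝ → α → ℝ)
    (hψ : Measurable ψ) (hw : ∀ s, Measurable (w s))
    (hwnonneg : ∀ s z, 0 ≤ w s z)
    (J : ℝ → ℝ → ℝ)
    (hJ : ∀ s u : ℝ, J s u = ∫ x, Real.exp (-(∫ r in (0:ℝ)..s, w r (Z x))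
      - (∫ r in (0:ℝ)..u, (ψ r + w r (Z x)))) ∂μ)
    (t : ℝ) (ht : 0 < t) (hJpos : 0 < J t t)
    (Ds Du : ℝ)
    (hDs : HasDerivAt (fun s => J s t) Ds t)
    (hDu : HasDerivAt (fun u => J t u) Du t)
    -- differentiation under the expectation is valid:
    (hDs' : Ds = ∫ x, (-(w t (Z x))) * Real.exp (-(∫ r in (0:ℝ)..t, w r (Z x))
      - (∫ r in (0:ℝ)..t, (ψ r + w r (Z x)))) ∂μ)
    (hDu' : Du = ∫ x, (-(ψ t + w t (Z x))) * Real.exp (-(∫ r in (0:ℝ)..t, w r (Z x))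
      - (∫ r in (0:ℝ)..t, (ψ r + w r (Z x)))) ∂μ)
    (hint : Integrable (fun x => Real.exp (-(∫ r in (0:ℝ)..t, w r (Z x))
      - (∫ r in (0:ℝ)..t, (ψ r + w r (Z x))))) μ)
    (hint' : Integrable (fun x => w t (Z x) * Real.exp (-(∫ r in (0:ℝ)..t, w r (Z x))
      - (∫ r in (0:ℝ)..t, (ψ r + w r (Z x))))) μ) :
    (-Du) / J t t - (-Ds) / J t t = ψ t := by
  have hE : ∀ x, (-(ψ t + w t (Z x))) * Real.exp (-(∫ r in (0:ℝ)..t, w r (Z x))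
      - (∫ r in (0:ℝ)..t, (ψ r + w r (Z x))))
      = (-ψ t) * Real.exp (-(∫ r in (0:ℝ)..t, w r (Z x))
      - (∫ r in (0:ℝ)..t, (ψ r + w r (Z x))))
      + -(w t (Z x) * Real.exp (-(∫ r in (0:ℝ)..t, w r (Z x))
      - (∫ r in (0:ℝ)..t, (ψ r + w r (Z x))))) := by
    intro x; ring
  have hDu2 : Du = -ψ t * J t t + Ds := by
    rw [hDu', hDs', hJ]
    simp only [hE]
    have key : ∫ x, ((-ψ t) * Real.exp (-(∫ r in (0:ℝ)..t, w r (Z x))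
        - (∫ r in (0:ℝ)..t, (ψ r + w r (Z x))))
        + -(w t (Z x) * Real.exp (-(∫ r in (0:ℝ)..t, w r (Z x))
        - (∫ r in (0:ℝ)..t, (ψ r + w r (Z x)))))) ∂μ
        = (∫ x, (-ψ t) * Real.exp (-(∫ r in (0:ℝ)..t, w r (Z x))
        - (∫ r in (0:ℝ)..t, (ψ r + w r (Z x)))) ∂μ)
        + ∫ x, -(w t (Z x) * Real.exp (-(∫ r in (0:ℝ)..t, w r (Z x))
        - (∫ r in (0:ℝ)..t, (ψ r + w r (Z x))))) ∂μ :=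
      integral_add (hint.const_mul _) hint'.neg
    rw [key, integral_const_mul, integral_neg]
    simp [neg_mul, integral_neg]
  have hne : J t t ≠ 0 := ne_of_gt hJpos
  rw [hDu2]
  field_simp
  ring
end
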